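/- Let X be wep-connected and x₁, x₂ ∈ X. For each path-homotopy class [α] ∈ πX(x₁, x₂) there exists a well-targeted path β with β(0) = x₁, β(1) = x₂ and β path-homotopic to α rel endpoints. -/

import Mathlib

open unitInterval Topology

/-- A path `α` is well-targeted if every neighborhood `U` of `α` in the space of paths
starting at `α 0` admits an open neighborhood `V` of `α 1` each of whose points is the
endpoint of some path in `U`. -/
def IsWellTargeted {X : Type*} [TopologicalSpace X] (α : C(I, X)) : Prop :=
  ∀ U : Set {β : C(I, X) // β 0 = α 0}, IsOpen U →
    (⟨α, rfl⟩ : {β : C(I, X) // β 0 = α 0}) ∈ U →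
    ∃ V : Set X, IsOpen V ∧ α 1 ∈ V ∧ ∀ b ∈ V, ∃ β ∈ U, β.1 1 = b

/-- A path `α` is well-ended if every neighborhood `U` of `α` in `𝒫X` admits open
neighborhoods `V₀, V₁` of `α 0, α 1` such that every pair `(a, b) ∈ V₀ × V₁` is joined
by a path in `U`. -/
def IsWellEnded {X : Type*} [TopologicalSpace X] (α : C(I, X)) : Prop :=
  ∀ U : Set C(I, X), IsOpen U → α ∈ U →
    ∃ V₀ V₁ : Set X, IsOpen V₀ ∧ IsOpen V₁ ∧ α 0 ∈ V₀ ∧ α 1 ∈ V₁ ∧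
      ∀ a ∈ V₀, ∀ b ∈ V₁, ∃ β ∈ U, β 0 = a ∧ β 1 = b

/-- A space is wep-connected if every pair of its points is joined by a well-ended path. -/
def WepConnected (X : Type*) [TopologicalSpace X] : Prop :=
  ∀ x y : X, ∃ α : C(I, X), α 0 = x ∧ α 1 = y ∧ IsWellEnded α

section Aux

variable {X : Type*} [TopologicalSpace X] {x₁ x₂ : X}

/-- The uncurried "glue `f` with the reverse of `δ`" map. -/
noncomputable def glueAux (f : Path x₁ x₂) (p : {δ : C(I, X) // δ 1 = x₂} × I) : X :=
  if ((p.2 : ℝ)) ≤ 1 / 2 then f.extend (2 * (p.2 : ℝ))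
  else p.1.1 (Set.projIcc (0 : ℝ) 1 zero_le_one (2 - 2 * (p.2 : ℝ)))

theorem continuous_glueAux (f : Path x₁ x₂) : Continuous (glueAux f) := by
  apply Continuous.if_le
  · exact f.continuous_extend.comp (by fun_prop)
  · exact ContinuousEval.continuous_eval.comp
      ((continuous_subtype_val.comp continuous_fst).prodMk
        ((continuous_projIcc (h := zero_le_one)).comp (by fun_prop)))
  · fun_prop
  · fun_prop
  · rintro ⟨δ, t⟩ ht
    simp only at ht ⊢
    rw [ht]
    norm_num [Set.projIcc_right, δ.2, f.extend_one]

/-- Gluing a fixed path `f : x₁ → x₂` with the reverse of a variable path ending at `x₂`,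
as a continuous map. -/
noncomputable def glue (f : Path x₁ x₂) : C({δ : C(I, X) // δ 1 = x₂}, C(I, X)) :=
  ContinuousMap.curry ⟨glueAux f, continuous_glueAux f⟩

theorem glue_apply_zero (f : Path x₁ x₂) (δ : {δ : C(I, X) // δ 1 = x₂}) :
    glue f δ 0 = x₁ := by
  show glueAux f (δ, 0) = x₁
  simp [glueAux]

theorem glue_apply_one (f : Path x₁ x₂) (δ : {δ : C(I, X) // δ 1 = x₂}) :
    glue f δ 1 = δ.1 0 := by
  show glueAux f (δ, 1) = δ.1 0
  have : ¬ (((1 : I) : ℝ) ≤ 1 / 2) := by norm_num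
  simp only [glueAux, this, if_false]
  norm_num [Set.projIcc_left]

theorem glue_eq_trans_symm (f : Path x₁ x₂) (e : Path x₂ x₂) :
    glue f ⟨e.toContinuousMap, e.target⟩ = (f.trans e.symm).toContinuousMap := by
  ext t
  show glueAux f (⟨e.toContinuousMap, e.target⟩, t) = (f.trans e.symm) t
  rw [Path.trans_apply]
  rcases le_or_gt ((t : ℝ)) (1 / 2) with h | h
  · simp only [glueAux]
    rw [if_pos h, dif_pos h,
      Path.extend_apply f (by constructor <;> [linarith [t.2.1]; linarith [t.2.2]])]
  · have h' : ¬ ((t : ℝ) ≤ 1 / 2) := not_le.mpr h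
    simp only [glueAux, h', if_false, dif_neg h']
    have hmem : (2 - 2 * (t : ℝ)) ∈ Set.Icc (0 : ℝ) 1 := by
      constructor <;> [linarith [t.2.2]; linarith]
    rw [Set.projIcc_of_mem _ hmem]
    show e _ = e.symm _
    rw [Path.symm_apply]
    congr 1
    ext
    show (2 - 2 * (t : ℝ)) = 1 - (2 * (t : ℝ) - 1)
    ring

end Aux

/-- In a wep-connected space, every path-homotopy class of paths from `x₁` to `x₂`
contains a well-targeted representative. -/
theorem exists_wellTargeted_homotopic {X : Type*} [TopologicalSpace X]
    (hX : WepConnected X) (x₁ x₂ : X) (α : Path x₁ x₂) :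
    ∃ β : Path x₁ x₂, α.Homotopic β ∧ IsWellTargeted β.toContinuousMap := by
  obtain ⟨ε, hε0, hε1, hwe⟩ := hX x₂ x₂
  set e : Path x₂ x₂ := ⟨ε, hε0, hε1⟩ with he
  refine ⟨(α.trans e).trans e.symm, ?_, ?_⟩
  · -- homotopy: α ≃ α·(refl) ≃ α·(e·e⁻¹) ≃ (α·e)·e⁻¹
    have h1 : α.Homotopic (α.trans (Path.refl x₂)) := ⟨(Path.Homotopy.transRefl α).symm⟩
    have h2 : (α.trans (Path.refl x₂)).Homotopic (α.trans (e.trans e.symm)) :=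
      Path.Homotopic.hcomp (Path.Homotopic.refl α) ⟨Path.Homotopy.reflTransSymm e⟩
    have h3 : (α.trans (e.trans e.symm)).Homotopic ((α.trans e).trans e.symm) :=
      Path.Homotopic.symm ⟨Path.Homotopy.transAssoc α e e.symm⟩
    exact (h1.trans h2).trans h3
  · -- well-targetedness
    set β : Path x₁ x₂ := (α.trans e).trans e.symm with hβ
    intro U hU hβU
    rw [isOpen_induced_iff] at hU
    obtain ⟨W, hWopen, hWU⟩ := hU
    -- the glue map for `α.trans e`
    set F := glue (α.trans e) with hF
    have hFe : F ⟨e.toContinuousMap, e.target⟩ = β.toContinuousMap :=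
      glue_eq_trans_symm (α.trans e) e
    have hβW : β.toContinuousMap ∈ W := by
      have := hβU
      rw [← hWU] at this
      exact this
    -- preimage of W under F, as an open set in C(I,X)
    have hopen : IsOpen (F ⁻¹' W) := hWopen.preimage F.continuous
    rw [isOpen_induced_iff] at hopen
    obtain ⟨W₂, hW₂open, hW₂⟩ := hopen
    have hεW₂ : ε ∈ W₂ := by
      have hmem : (⟨e.toContinuousMap, e.target⟩ : {δ : C(I, X) // δ 1 = x₂}) ∈ F ⁻¹' W := by
        simp only [Set.mem_preimage, hFe]; exact hβW
      rw [← hW₂] at hmem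
      exact hmem
    obtain ⟨V₀, V₁, hV₀open, _, hεV₀, hεV₁, hjoin⟩ := hwe W₂ hW₂open hεW₂
    refine ⟨V₀, hV₀open, ?_, ?_⟩
    · show β.toContinuousMap 1 ∈ V₀
      have : β.toContinuousMap 1 = x₂ := β.target
      rw [this, ← hε0]; exact hεV₀
    · intro b hb
      have hx₂V₁ : x₂ ∈ V₁ := by rw [← hε1]; exact hεV₁
      obtain ⟨δ, hδW₂, hδ0, hδ1⟩ := hjoin b hb x₂ hx₂V₁
      have hδF : F ⟨δ, hδ1⟩ ∈ W := by
        have h' : (⟨δ, hδ1⟩ : {δ : C(I, X) // δ 1 = x₂}) ∈ Subtype.val ⁻¹' W₂ := hδW₂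
        rw [hW₂] at h'
        exact h'
      have h0 : F ⟨δ, hδ1⟩ 0 = β.toContinuousMap 0 := by
        rw [glue_apply_zero]
        exact β.source.symm
      refine ⟨⟨F ⟨δ, hδ1⟩, h0⟩, ?_, ?_⟩
      · rw [← hWU]; exact hδF
      · show F ⟨δ, hδ1⟩ 1 = b
        rw [glue_apply_one]
        exact hδ0
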